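/- Let θ₁ > θ₂ > θ₃ > θ₄ be four distinct angles, each strictly between 0 and π, satisfying θ₄ > 2π/3 and θ₂ + θ₃ > π + θ₄. Then no set of four points in ℝ³ realises all four angles θ₁, θ₂, θ₃, θ₄ (and hence, since any four points lie in a 3-dimensional affine subspace, no set of four points in any dimension does). -/

import Mathlib

open EuclideanGeometry

/-- A set `P` of points realises the angle `θ` if some three points of `P`
form this angle. -/
def Realises {d : ℕ} (P : Set (EuclideanSpace ℝ (Fin d))) (θ : ℝ) : Prop :=
  ∃ A B C : EuclideanSpace ℝ (Fin d),
    A ∈ P ∧ B ∈ P ∧ C ∈ P ∧ A ≠ B ∧ C ≠ B ∧ EuclideanGeometry.angle A B C = θ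

/-- The ray from `B` towards `A`, encoded by its vertex together with the
unit vector in its direction. -/
noncomputable def rayOf {d : ℕ} (B A : EuclideanSpace ℝ (Fin d)) :
    EuclideanSpace ℝ (Fin d) × EuclideanSpace ℝ (Fin d) :=
  (B, ‖A - B‖⁻¹ • (A - B))

/-- A tuple `θ` of angles is realised with multiplicity by `P` if each `θ i` is
realised at some vertex `B i` by points `A i, C i` of `P`, with the unordered
pairs of rays pairwise distinct. -/
def RealisesMult {d n : ℕ} (P : Set (EuclideanSpace ℝ (Fin d))) (θ : Fin n → ℝ) : Prop :=
  ∃ A B C : Fin n → EuclideanSpace ℝ (Fin d),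
    (∀ i, A i ∈ P ∧ B i ∈ P ∧ C i ∈ P ∧ A i ≠ B i ∧ C i ≠ B i ∧
      EuclideanGeometry.angle (A i) (B i) (C i) = θ i) ∧
    Function.Injective fun i =>
      ({rayOf (B i) (A i), rayOf (B i) (C i)} :
        Set (EuclideanSpace ℝ (Fin d) × EuclideanSpace ℝ (Fin d)))


open Real
open scoped RealInnerProductSpace

namespace St19


variable {V : Type*} [NormedAddCommGroup V] [InnerProductSpace ℝ V]

private lemma unit_angle_triangle {u v w : V} (hu : ‖u‖ = 1) (hv : ‖v‖ = 1) (hw : ‖w‖ = 1) :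
    InnerProductGeometry.angle u w ≤
      InnerProductGeometry.angle u v + InnerProductGeometry.angle v w := by
  by_cases hle : π ≤ InnerProductGeometry.angle u v + InnerProductGeometry.angle v w
  · exact (InnerProductGeometry.angle_le_pi u w).trans hle
  push_neg at hle
  set a := InnerProductGeometry.angle u v with ha
  set b := InnerProductGeometry.angle v w with hb
  have ha0 : 0 ≤ a := InnerProductGeometry.angle_nonneg _ _
  have hb0 : 0 ≤ b := InnerProductGeometry.angle_nonneg _ _
  have hapi : a ≤ π := InnerProductGeometry.angle_le_pi _ _
  have hbpi : b ≤ π := InnerProductGeometry.angle_le_pi _ _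
  have hca : ⟪u, v⟫ = Real.cos a := by
    rw [ha, InnerProductGeometry.cos_angle, hu, hv]; norm_num
  have hcb : ⟪v, w⟫ = Real.cos b := by
    rw [hb, InnerProductGeometry.cos_angle, hv, hw]; norm_num
  have hvv : ⟪v, v⟫ = 1 := by
    rw [real_inner_self_eq_norm_mul_norm, hv]; norm_num
  have hcb' : ⟪w, v⟫ = Real.cos b := by rw [real_inner_comm]; exact hcb
  have h1 : ⟪u - ⟪u, v⟫ • v, w - ⟪v, w⟫ • v⟫
      = ⟪u, w⟫ - Real.cos a * Real.cos b := by
    simp only [inner_sub_left, inner_sub_right, real_inner_smul_left, real_inner_smul_right, hvv]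
    simp only [hca, hcb, hcb']; ring
  have h2 : ‖u - ⟪u, v⟫ • v‖ = Real.sin a := by
    have hsq : ‖u - ⟪u, v⟫ • v‖ ^ 2 = 1 - Real.cos a ^ 2 := by
      rw [norm_sub_sq_real, real_inner_smul_right, norm_smul, hu, hv, hca]
      simp [Real.norm_eq_abs, sq_abs]; ring
    rw [Real.sin_eq_sqrt_one_sub_cos_sq ha0 hapi, ← hsq, Real.sqrt_sq (norm_nonneg _)]
  have h3 : ‖w - ⟪v, w⟫ • v‖ = Real.sin b := by
    have hsq : ‖w - ⟪v, w⟫ • v‖ ^ 2 = 1 - Real.cos b ^ 2 := by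
      rw [norm_sub_sq_real, real_inner_smul_right, norm_smul, hw, hv, hcb, hcb']
      simp [Real.norm_eq_abs, sq_abs]; ring
    rw [Real.sin_eq_sqrt_one_sub_cos_sq hb0 hbpi, ← hsq, Real.sqrt_sq (norm_nonneg _)]
  have h4 : -(Real.sin a * Real.sin b) ≤ ⟪u - ⟪u, v⟫ • v, w - ⟪v, w⟫ • v⟫ := by
    have habs := abs_real_inner_le_norm (u - ⟪u, v⟫ • v) (w - ⟪v, w⟫ • v)
    rw [h2, h3] at habs
    have := (abs_le.mp habs).1
    linarith
  have key : Real.cos (a + b) ≤ ⟪u, w⟫ := by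
    rw [Real.cos_add]; rw [h1] at h4; linarith
  have hang : InnerProductGeometry.angle u w = Real.arccos ⟪u, w⟫ := by
    rw [InnerProductGeometry.angle, hu, hw]; norm_num
  rw [hang]
  calc Real.arccos ⟪u, w⟫ ≤ Real.arccos (Real.cos (a + b)) := by
        simp only [Real.arccos]
        have := Real.monotone_arcsin key
        linarith
    _ = a + b := Real.arccos_cos (by linarith) (le_of_lt hle)

lemma vec_angle_triangle {x y z : V} (hx : x ≠ 0) (hy : y ≠ 0) (hz : z ≠ 0) :
    InnerProductGeometry.angle x z ≤
      InnerProductGeometry.angle x y + InnerProductGeometry.angle y z := by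
  have hx' : (0:ℝ) < ‖x‖⁻¹ := inv_pos.2 (norm_pos_iff.2 hx)
  have hy' : (0:ℝ) < ‖y‖⁻¹ := inv_pos.2 (norm_pos_iff.2 hy)
  have hz' : (0:ℝ) < ‖z‖⁻¹ := inv_pos.2 (norm_pos_iff.2 hz)
  have e1 : InnerProductGeometry.angle (‖x‖⁻¹ • x) (‖z‖⁻¹ • z) = InnerProductGeometry.angle x z := by
    rw [InnerProductGeometry.angle_smul_left_of_pos _ _ hx',
      InnerProductGeometry.angle_smul_right_of_pos _ _ hz']
  have e2 : InnerProductGeometry.angle (‖x‖⁻¹ • x) (‖y‖⁻¹ • y) = InnerProductGeometry.angle x y := by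
    rw [InnerProductGeometry.angle_smul_left_of_pos _ _ hx',
      InnerProductGeometry.angle_smul_right_of_pos _ _ hy']
  have e3 : InnerProductGeometry.angle (‖y‖⁻¹ • y) (‖z‖⁻¹ • z) = InnerProductGeometry.angle y z := by
    rw [InnerProductGeometry.angle_smul_left_of_pos _ _ hy',
      InnerProductGeometry.angle_smul_right_of_pos _ _ hz']
  rw [← e1, ← e2, ← e3]
  exact unit_angle_triangle (norm_smul_inv_norm hx) (norm_smul_inv_norm hy) (norm_smul_inv_norm hz)


section Pt

variable {V : Type*} {Pt : Type*} [NormedAddCommGroup V] [InnerProductSpace ℝ V]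
  [MetricSpace Pt] [NormedAddTorsor V Pt]

/-- Triangle inequality for angles at a point. -/
lemma angle_pt_triangle {b p q r : Pt} (hp : p ≠ b) (hq : q ≠ b) (hr : r ≠ b) :
    ∠ p b r ≤ ∠ p b q + ∠ q b r := by
  have e : ∀ x y : Pt, ∠ x b y = InnerProductGeometry.angle (x -ᵥ b) (y -ᵥ b) := fun _ _ => rfl
  rw [e, e, e]
  exact vec_angle_triangle (vsub_ne_zero.2 hp) (vsub_ne_zero.2 hq) (vsub_ne_zero.2 hr)

lemma cos_two_pi_div_three : Real.cos (2 * π / 3) = -(1/2) := by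
  rw [show (2 * π / 3 : ℝ) = π - π/3 by ring, Real.cos_pi_sub, Real.cos_pi_div_three]

/-- An angle strictly greater than `2π/3` has cosine `< -1/2`. -/
lemma cos_lt_of_big {θ : ℝ} (hθπ : θ ≤ π) (h : 2 * π / 3 < θ) : Real.cos θ < -(1/2) := by
  have hπ := Real.pi_pos
  have : Real.cos θ < Real.cos (2 * π / 3) :=
    Real.strictAntiOn_cos ⟨by linarith, by linarith⟩ ⟨by linarith, hθπ⟩ h
  rw [cos_two_pi_div_three] at this
  linarith

/-- Three angles greater than `2π/3` cannot occur at a common vertex. -/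
lemma not_three_big {b x y z : Pt} (hx : x ≠ b) (hy : y ≠ b) (hz : z ≠ b)
    (h1 : 2 * π / 3 < ∠ x b y) (h2 : 2 * π / 3 < ∠ x b z) (h3 : 2 * π / 3 < ∠ y b z) :
    False := by
  set u := (‖(x -ᵥ b : V)‖⁻¹ • (x -ᵥ b) : V) with hu
  set v := (‖(y -ᵥ b : V)‖⁻¹ • (y -ᵥ b) : V) with hv
  set w := (‖(z -ᵥ b : V)‖⁻¹ • (z -ᵥ b) : V) with hw
  have hxv : (x -ᵥ b : V) ≠ 0 := vsub_ne_zero.2 hx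
  have hyv : (y -ᵥ b : V) ≠ 0 := vsub_ne_zero.2 hy
  have hzv : (z -ᵥ b : V) ≠ 0 := vsub_ne_zero.2 hz
  have hun : ‖u‖ = 1 := norm_smul_inv_norm hxv
  have hvn : ‖v‖ = 1 := norm_smul_inv_norm hyv
  have hwn : ‖w‖ = 1 := norm_smul_inv_norm hzv
  have hinv : ∀ t : V, t ≠ 0 → (0:ℝ) < ‖t‖⁻¹ := fun t ht => inv_pos.2 (norm_pos_iff.2 ht)
  have keyineq : ∀ (s t : V), ‖s‖ = 1 → ‖t‖ = 1 →
      2 * π / 3 < InnerProductGeometry.angle s t → ⟪s, t⟫ < -(1/2) := by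
    intro s t hs ht hang
    have hc := cos_lt_of_big (InnerProductGeometry.angle_le_pi s t) hang
    rw [InnerProductGeometry.cos_angle, hs, ht] at hc
    simpa using hc
  have a1 : InnerProductGeometry.angle u v = ∠ x b y := by
    rw [hu, hv, InnerProductGeometry.angle_smul_left_of_pos _ _ (hinv _ hxv),
      InnerProductGeometry.angle_smul_right_of_pos _ _ (hinv _ hyv)]
    rfl
  have a2 : InnerProductGeometry.angle u w = ∠ x b z := by
    rw [hu, hw, InnerProductGeometry.angle_smul_left_of_pos _ _ (hinv _ hxv),
      InnerProductGeometry.angle_smul_right_of_pos _ _ (hinv _ hzv)]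
    rfl
  have a3 : InnerProductGeometry.angle v w = ∠ y b z := by
    rw [hv, hw, InnerProductGeometry.angle_smul_left_of_pos _ _ (hinv _ hyv),
      InnerProductGeometry.angle_smul_right_of_pos _ _ (hinv _ hzv)]
    rfl
  have i1 : ⟪u, v⟫ < -(1/2) := keyineq u v hun hvn (a1 ▸ h1)
  have i2 : ⟪u, w⟫ < -(1/2) := keyineq u w hun hwn (a2 ▸ h2)
  have i3 : ⟪v, w⟫ < -(1/2) := keyineq v w hvn hwn (a3 ▸ h3)
  have hexp : ‖u + v + w‖ ^ 2 = 3 + 2*⟪u, v⟫ + 2*⟪u, w⟫ + 2*⟪v, w⟫ := by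
    rw [norm_add_sq_real (u + v) w, norm_add_sq_real u v, inner_add_left, hun, hvn, hwn]
    ring
  nlinarith [sq_nonneg ‖u + v + w‖, hexp]

/-- In a (possibly degenerate) triangle, the sum of the angles at two
distinct vertices is at most `π`. -/
lemma two_angles_le_pi {p q r : Pt} (hpr : p ≠ r) (hqr : q ≠ r) :
    ∠ q p r + ∠ p q r ≤ π := by
  have hsum := EuclideanGeometry.angle_add_angle_add_angle_eq_pi (p₁ := r) (p₂ := p) q
    hpr
  have h3 := EuclideanGeometry.angle_nonneg q r p
  rw [EuclideanGeometry.angle_comm r p q] at hsum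
  linarith

/-- Two angles greater than `2π/3` cannot occur at two vertices of the same triangle. -/
lemma not_two_big {p q r : Pt} (hpr : p ≠ r) (hqr : q ≠ r)
    (h1 : 2 * π / 3 < ∠ q p r) (h2 : 2 * π / 3 < ∠ p q r) : False := by
  have := two_angles_le_pi hpr hqr
  have hπ := Real.pi_pos
  linarith

/-- If the angle at `v` in the triangle `u v w` is bigger than `2π/3`, then the side `u w`
is strictly longer than `u v`. -/
lemma not_big_at_end {u v w : Pt} {θ : ℝ} (huv : u ≠ v) (hwv : w ≠ v)
    (hmax : dist u w ≤ dist u v) (hθ : 2 * π / 3 < θ) (h : ∠ u v w = θ) : False := by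
  have hπ := Real.pi_pos
  have hcos : Real.cos (∠ u v w) < -(1/2) :=
    cos_lt_of_big (EuclideanGeometry.angle_le_pi u v w) (h ▸ hθ)
  have hlaw := EuclideanGeometry.law_cos u v w
  have d1 : 0 < dist u v := dist_pos.2 huv
  have d2 : 0 < dist w v := dist_pos.2 hwv
  have hd : 0 ≤ dist u w := dist_nonneg
  have key : dist u v * dist w v < 2 * dist u v * dist w v * (-(Real.cos (∠ u v w))) := by
    nlinarith [mul_pos d1 d2]
  nlinarith [mul_self_le_mul_self hd hmax, mul_pos d2 d2, mul_pos d1 d2, hlaw, key]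

end Pt

/-- Pigeonhole: four indices each in one of four classes, with each class containing
at most one index, yields a system of distinct representatives. -/
lemma pigeon4 {P Q R S : Fin 4 → Prop}
    (h : ∀ i, P i ∨ Q i ∨ R i ∨ S i)
    (hP : ∀ i j, i ≠ j → P i → P j → False)
    (hQ : ∀ i j, i ≠ j → Q i → Q j → False)
    (hR : ∀ i j, i ≠ j → R i → R j → False)
    (hS : ∀ i j, i ≠ j → S i → S j → False) :
    ∃ i j k l : Fin 4, i ≠ j ∧ i ≠ k ∧ i ≠ l ∧ j ≠ k ∧ j ≠ l ∧ k ≠ l ∧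
      P i ∧ Q j ∧ R k ∧ S l := by
  classical
  set f : Fin 4 → Fin 4 := fun i => if P i then 0 else if Q i then 1 else if R i then 2 else 3
    with hf
  have hspec : ∀ i, (f i = 0 → P i) ∧ (f i = 1 → Q i) ∧ (f i = 2 → R i) ∧ (f i = 3 → S i) := by
    intro i
    by_cases hp : P i
    · have hv : f i = 0 := by simp only [hf]; rw [if_pos hp]
      rw [hv]
      exact ⟨fun _ => hp, fun hh => absurd hh (by decide), fun hh => absurd hh (by decide),
        fun hh => absurd hh (by decide)⟩
    · by_cases hq : Q i
      · have hv : f i = 1 := by simp only [hf]; rw [if_neg hp, if_pos hq]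
        rw [hv]
        exact ⟨fun hh => absurd hh (by decide), fun _ => hq, fun hh => absurd hh (by decide),
          fun hh => absurd hh (by decide)⟩
      · by_cases hr : R i
        · have hv : f i = 2 := by simp only [hf]; rw [if_neg hp, if_neg hq, if_pos hr]
          rw [hv]
          exact ⟨fun hh => absurd hh (by decide), fun hh => absurd hh (by decide), fun _ => hr,
            fun hh => absurd hh (by decide)⟩
        · have hs : S i := by
            rcases h i with hh | hh | hh | hh
            · exact absurd hh hp
            · exact absurd hh hq
            · exact absurd hh hr
            · exact hh
          have hv : f i = 3 := by simp only [hf]; rw [if_neg hp, if_neg hq, if_neg hr]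
          rw [hv]
          exact ⟨fun hh => absurd hh (by decide), fun hh => absurd hh (by decide),
            fun hh => absurd hh (by decide), fun _ => hs⟩
  have hinj : Function.Injective f := by
    intro i j hfe
    by_contra hne
    have hv : f i = 0 ∨ f i = 1 ∨ f i = 2 ∨ f i = 3 := by omega
    rcases hv with hv | hv | hv | hv
    · exact hP i j hne ((hspec i).1 hv) ((hspec j).1 (hfe.symm.trans hv))
    · exact hQ i j hne ((hspec i).2.1 hv) ((hspec j).2.1 (hfe.symm.trans hv))
    · exact hR i j hne ((hspec i).2.2.1 hv) ((hspec j).2.2.1 (hfe.symm.trans hv))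
    · exact hS i j hne ((hspec i).2.2.2 hv) ((hspec j).2.2.2 (hfe.symm.trans hv))
  have hsurj : Function.Surjective f := Finite.surjective_of_injective hinj
  obtain ⟨i, hi⟩ := hsurj 0
  obtain ⟨j, hj⟩ := hsurj 1
  obtain ⟨k, hk⟩ := hsurj 2
  obtain ⟨l, hl⟩ := hsurj 3
  refine ⟨i, j, k, l, ?_, ?_, ?_, ?_, ?_, ?_,
    (hspec i).1 hi, (hspec j).2.1 hj, (hspec k).2.2.1 hk, (hspec l).2.2.2 hl⟩ <;>
    (intro hh; subst hh)
  · exact absurd (hi.symm.trans hj) (by decide)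
  · exact absurd (hi.symm.trans hk) (by decide)
  · exact absurd (hi.symm.trans hl) (by decide)
  · exact absurd (hj.symm.trans hk) (by decide)
  · exact absurd (hj.symm.trans hl) (by decide)
  · exact absurd (hk.symm.trans hl) (by decide)

section Main

variable {n : ℕ}

local notation "E" => EuclideanSpace ℝ (Fin n)

set_option maxHeartbeats 1000000 in
lemma no_four {θ₁ θ₂ θ₃ θ₄ : ℝ}
    (h12 : θ₂ < θ₁) (h23 : θ₃ < θ₂) (h34 : θ₄ < θ₃)
    (hπ1 : θ₁ < π)
    (hbig : 2 * π / 3 < θ₄) (hsum : π + θ₄ < θ₂ + θ₃) :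
    ¬ ∃ P : Finset (EuclideanSpace ℝ (Fin n)), P.card = 4 ∧
      Realises (P : Set (EuclideanSpace ℝ (Fin n))) θ₁ ∧
      Realises (P : Set (EuclideanSpace ℝ (Fin n))) θ₂ ∧
      Realises (P : Set (EuclideanSpace ℝ (Fin n))) θ₃ ∧
      Realises (P : Set (EuclideanSpace ℝ (Fin n))) θ₄ := by
  rintro ⟨P, hcard, hr1, hr2, hr3, hr4⟩
  classical
  have hπ := Real.pi_pos
  set θf : Fin 4 → ℝ := ![θ₁, θ₂, θ₃, θ₄] with hθf
  have hv0 : θf 0 = θ₁ := rfl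
  have hv1 : θf 1 = θ₂ := rfl
  have hv2 : θf 2 = θ₃ := rfl
  have hv3 : θf 3 = θ₄ := rfl
  have hcases4 : ∀ i : Fin 4, i = 0 ∨ i = 1 ∨ i = 2 ∨ i = 3 := by intro i; omega
  have hbigf : ∀ i, 2 * π / 3 < θf i := by
    intro i
    rcases hcases4 i with rfl | rfl | rfl | rfl <;>
      simp only [hv0, hv1, hv2, hv3] <;> linarith
  have hposf : ∀ i, 0 < θf i := by
    intro i; have := hbigf i; linarith
  have hnef : ∀ i j : Fin 4, i ≠ j → θf i ≠ θf j := by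
    intro i j hij
    rcases hcases4 i with rfl | rfl | rfl | rfl <;>
      rcases hcases4 j with rfl | rfl | rfl | rfl <;>
        simp only [hv0, hv1, hv2, hv3] <;>
          first
            | exact absurd rfl hij
            | exact ne_of_gt (by linarith)
            | exact ne_of_lt (by linarith)
  have h2small : ∀ i j : Fin 4, i ≠ j → i ≠ 3 → j ≠ 3 → π + θ₄ < θf i + θf j := by
    intro i j hij hi3 hj3
    rcases hcases4 i with rfl | rfl | rfl | rfl <;>
      rcases hcases4 j with rfl | rfl | rfl | rfl <;>
        simp only [hv0, hv1, hv2, hv3] <;>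
          first
            | exact absurd rfl hij
            | exact absurd rfl hi3
            | exact absurd rfl hj3
            | linarith
  -- extract realisations with all three points distinct
  have hreal : ∀ i : Fin 4, ∃ A B C : E, A ∈ P ∧ B ∈ P ∧ C ∈ P ∧ A ≠ B ∧ C ≠ B ∧ A ≠ C ∧
      ∠ A B C = θf i := by
    intro i
    have hr : Realises (P : Set E) (θf i) := by
      rcases hcases4 i with rfl | rfl | rfl | rfl
      · exact hr1
      · exact hr2
      · exact hr3
      · exact hr4
    obtain ⟨A, B, C, hA, hB, hC, hAB, hCB, hang⟩ := hr
    refine ⟨A, B, C, hA, hB, hC, hAB, hCB, ?_, hang⟩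
    intro hAC
    rw [← hAC] at hang
    rw [EuclideanGeometry.angle_self_of_ne hAB] at hang
    exact absurd hang.symm (ne_of_gt (hposf i))
  choose A B C hA hB hC hAB hCB hAC hang using hreal
  -- the diameter pair
  have hPne : (P ×ˢ P).Nonempty := ⟨(A 0, B 0), Finset.mem_product.2 ⟨hA 0, hB 0⟩⟩
  obtain ⟨⟨a, b⟩, habm, hmaxp⟩ := Finset.exists_max_image (P ×ˢ P) (fun q => dist q.1 q.2) hPne
  have ha : a ∈ P := (Finset.mem_product.1 habm).1
  have hb : b ∈ P := (Finset.mem_product.1 habm).2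
  have hmax : ∀ u ∈ P, ∀ w ∈ P, dist u w ≤ dist a b := by
    intro u hu w hw
    exact hmaxp (u, w) (Finset.mem_product.2 ⟨hu, hw⟩)
  have hab : a ≠ b := by
    intro hh
    have h0 : (0:ℝ) < dist (A 0) (B 0) := dist_pos.2 (hAB 0)
    have h1 : dist (A 0) (B 0) ≤ dist a b := hmax _ (hA 0) _ (hB 0)
    rw [hh, dist_self] at h1
    linarith
  -- the two remaining points
  have hbQ : b ∈ P.erase a := Finset.mem_erase.2 ⟨hab.symm, hb⟩
  have hQcard : ((P.erase a).erase b).card = 2 := by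
    rw [Finset.card_erase_of_mem hbQ, Finset.card_erase_of_mem ha, hcard]
  obtain ⟨c, d, hcd, hQ⟩ := Finset.card_eq_two.1 hQcard
  have hcQ : c ∈ (P.erase a).erase b := by rw [hQ]; simp
  have hdQ : d ∈ (P.erase a).erase b := by rw [hQ]; simp
  have hcb : c ≠ b := (Finset.mem_erase.1 hcQ).1
  have hca : c ≠ a := (Finset.mem_erase.1 (Finset.mem_erase.1 hcQ).2).1
  have hc : c ∈ P := (Finset.mem_erase.1 (Finset.mem_erase.1 hcQ).2).2
  have hdb : d ≠ b := (Finset.mem_erase.1 hdQ).1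
  have hda : d ≠ a := (Finset.mem_erase.1 (Finset.mem_erase.1 hdQ).2).1
  have hd : d ∈ P := (Finset.mem_erase.1 (Finset.mem_erase.1 hdQ).2).2
  have hmemP : ∀ x ∈ P, x = a ∨ x = b ∨ x = c ∨ x = d := by
    intro x hx
    by_cases hxa : x = a
    · exact Or.inl hxa
    by_cases hxb : x = b
    · exact Or.inr (Or.inl hxb)
    have hmem : x ∈ (P.erase a).erase b :=
      Finset.mem_erase.2 ⟨hxb, Finset.mem_erase.2 ⟨hxa, hx⟩⟩
    rw [hQ] at hmem
    simp only [Finset.mem_insert, Finset.mem_singleton] at hmem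
    tauto
  -- classification of the four realised angles
  have hclass : ∀ i : Fin 4,
      (∠ a c b = θf i) ∨ (∠ a d b = θf i) ∨
      (∠ c a d = θf i ∨ ∠ a c d = θf i ∨ ∠ a d c = θf i) ∨
      (∠ c b d = θf i ∨ ∠ b c d = θf i ∨ ∠ b d c = θf i) := by
    intro i
    have hangi := hang i
    have hABi := hAB i
    have hCBi := hCB i
    have hACi := hAC i
    have bad : ∀ t : E, t ∈ P → t ≠ a → t ≠ b →
        (∠ b a t ≠ θf i) ∧ (∠ t a b ≠ θf i) ∧ (∠ a b t ≠ θf i) ∧ (∠ t b a ≠ θf i) := by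
      intro t ht hta htb
      have hb1 : ∠ b a t ≠ θf i := by
        intro hcontra
        refine not_big_at_end (u := b) (v := a) (w := t) hab.symm hta ?_ (hbigf i) hcontra
        rw [dist_comm b a]
        exact hmax b hb t ht
      have hb2 : ∠ a b t ≠ θf i := by
        intro hcontra
        exact not_big_at_end (u := a) (v := b) (w := t) hab htb
          (hmax a ha t ht) (hbigf i) hcontra
      refine ⟨hb1, ?_, hb2, ?_⟩
      · rw [EuclideanGeometry.angle_comm]; exact hb1
      · rw [EuclideanGeometry.angle_comm]; exact hb2
    have badc := bad c hc hca hcb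
    have badd := bad d hd hda hdb
    rcases hmemP _ (hA i) with eA | eA | eA | eA <;>
      rcases hmemP _ (hB i) with eB | eB | eB | eB <;>
        rcases hmemP _ (hC i) with eC | eC | eC | eC <;>
          simp only [eA, eB, eC] at hangi hABi hCBi hACi <;>
            first
              | exact absurd rfl hABi
              | exact absurd rfl hCBi
              | exact absurd rfl hACi
              | exact absurd hangi badc.1
              | exact absurd hangi badc.2.1
              | exact absurd hangi badc.2.2.1
              | exact absurd hangi badc.2.2.2
              | exact absurd hangi badd.1
              | exact absurd hangi badd.2.1
              | exact absurd hangi badd.2.2.1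
              | exact absurd hangi badd.2.2.2
              | exact Or.inl hangi
              | exact Or.inr (Or.inl hangi)
              | exact Or.inr (Or.inr (Or.inl (Or.inl hangi)))
              | exact Or.inr (Or.inr (Or.inl (Or.inr (Or.inl hangi))))
              | exact Or.inr (Or.inr (Or.inl (Or.inr (Or.inr hangi))))
              | exact Or.inr (Or.inr (Or.inr (Or.inl hangi)))
              | exact Or.inr (Or.inr (Or.inr (Or.inr (Or.inl hangi))))
              | exact Or.inr (Or.inr (Or.inr (Or.inr (Or.inr hangi))))
              | (rw [EuclideanGeometry.angle_comm] at hangi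
                 first
                   | exact Or.inl hangi
                   | exact Or.inr (Or.inl hangi)
                   | exact Or.inr (Or.inr (Or.inl (Or.inl hangi)))
                   | exact Or.inr (Or.inr (Or.inl (Or.inr (Or.inl hangi))))
                   | exact Or.inr (Or.inr (Or.inl (Or.inr (Or.inr hangi))))
                   | exact Or.inr (Or.inr (Or.inr (Or.inl hangi)))
                   | exact Or.inr (Or.inr (Or.inr (Or.inr (Or.inl hangi))))
                   | exact Or.inr (Or.inr (Or.inr (Or.inr (Or.inr hangi)))))
  -- at most one realised angle per triangle
  have hPuniq : ∀ i j : Fin 4, i ≠ j → (∠ a c b = θf i) → (∠ a c b = θf j) → False := by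
    intro i j hij hi hj; exact hnef i j hij (hi.symm.trans hj)
  have hQuniq : ∀ i j : Fin 4, i ≠ j → (∠ a d b = θf i) → (∠ a d b = θf j) → False := by
    intro i j hij hi hj; exact hnef i j hij (hi.symm.trans hj)
  have bigof : ∀ (i : Fin 4) (x y z : E), (∠ x y z = θf i) → 2 * π / 3 < ∠ x y z := by
    intro i x y z h; rw [h]; exact hbigf i
  have bigof' : ∀ (i : Fin 4) (x y z : E), (∠ x y z = θf i) → 2 * π / 3 < ∠ z y x := by
    intro i x y z h; rw [EuclideanGeometry.angle_comm, h]; exact hbigf i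
  have hRuniq : ∀ i j : Fin 4, i ≠ j →
      (∠ c a d = θf i ∨ ∠ a c d = θf i ∨ ∠ a d c = θf i) →
      (∠ c a d = θf j ∨ ∠ a c d = θf j ∨ ∠ a d c = θf j) → False := by
    intro i j hij hi hj
    rcases hi with hi | hi | hi <;> rcases hj with hj | hj | hj
    · exact hnef i j hij (hi.symm.trans hj)
    · exact not_two_big (p := a) (q := c) (r := d) hda.symm hcd
        (bigof i _ _ _ hi) (bigof j _ _ _ hj)
    · exact not_two_big (p := a) (q := d) (r := c) hca.symm hcd.symm
        (bigof' i _ _ _ hi) (bigof j _ _ _ hj)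
    · exact not_two_big (p := a) (q := c) (r := d) hda.symm hcd
        (bigof j _ _ _ hj) (bigof i _ _ _ hi)
    · exact hnef i j hij (hi.symm.trans hj)
    · exact not_two_big (p := c) (q := d) (r := a) hca hda
        (bigof' i _ _ _ hi) (bigof' j _ _ _ hj)
    · exact not_two_big (p := a) (q := d) (r := c) hca.symm hcd.symm
        (bigof' j _ _ _ hj) (bigof i _ _ _ hi)
    · exact not_two_big (p := c) (q := d) (r := a) hca hda
        (bigof' j _ _ _ hj) (bigof' i _ _ _ hi)
    · exact hnef i j hij (hi.symm.trans hj)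
  have hSuniq : ∀ i j : Fin 4, i ≠ j →
      (∠ c b d = θf i ∨ ∠ b c d = θf i ∨ ∠ b d c = θf i) →
      (∠ c b d = θf j ∨ ∠ b c d = θf j ∨ ∠ b d c = θf j) → False := by
    intro i j hij hi hj
    rcases hi with hi | hi | hi <;> rcases hj with hj | hj | hj
    · exact hnef i j hij (hi.symm.trans hj)
    · exact not_two_big (p := b) (q := c) (r := d) hdb.symm hcd
        (bigof i _ _ _ hi) (bigof j _ _ _ hj)
    · exact not_two_big (p := b) (q := d) (r := c) hcb.symm hcd.symm
        (bigof' i _ _ _ hi) (bigof j _ _ _ hj)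
    · exact not_two_big (p := b) (q := c) (r := d) hdb.symm hcd
        (bigof j _ _ _ hj) (bigof i _ _ _ hi)
    · exact hnef i j hij (hi.symm.trans hj)
    · exact not_two_big (p := c) (q := d) (r := b) hcb hdb
        (bigof' i _ _ _ hi) (bigof' j _ _ _ hj)
    · exact not_two_big (p := b) (q := d) (r := c) hcb.symm hcd.symm
        (bigof' j _ _ _ hj) (bigof i _ _ _ hi)
    · exact not_two_big (p := c) (q := d) (r := b) hcb hdb
        (bigof' j _ _ _ hj) (bigof' i _ _ _ hi)
    · exact hnef i j hij (hi.symm.trans hj)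
  -- each triangle hosts exactly one realised angle
  obtain ⟨i, j, k, l, hij, hik, hil, hjk, hjl, hkl, hgi, hgj, hk', hl'⟩ :=
    pigeon4 hclass hPuniq hQuniq hRuniq hSuniq
  have hγ1 : 2 * π / 3 < ∠ a c b := by rw [hgi]; exact hbigf i
  have hγ2 : 2 * π / 3 < ∠ a d b := by rw [hgj]; exact hbigf j
  -- rule out the vertex `a` in the triangle `a c d`
  have hsmall_cab : ∠ c a b + ∠ a c b ≤ π :=
    two_angles_le_pi (p := a) (q := c) (r := b) hab hcb
  have hsmall_dab : ∠ d a b + ∠ a d b ≤ π :=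
    two_angles_le_pi (p := a) (q := d) (r := b) hab hdb
  have htri_a : ∠ c a d ≤ ∠ c a b + ∠ b a d :=
    angle_pt_triangle (b := a) (p := c) (q := b) (r := d) hca hab.symm hda
  have hcomm_bad : ∠ b a d = ∠ d a b := EuclideanGeometry.angle_comm _ _ _
  have hk : ∠ a c d = θf k ∨ ∠ a d c = θf k := by
    rcases hk' with hk' | hk' | hk'
    · exfalso
      have hbk := hbigf k
      rw [hcomm_bad] at htri_a
      rw [hk'] at htri_a
      linarith
    · exact Or.inl hk'
    · exact Or.inr hk'
  -- rule out the vertex `b` in the triangle `b c d`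
  have hsmall_cba : ∠ c b a + ∠ b c a ≤ π :=
    two_angles_le_pi (p := b) (q := c) (r := a) hab.symm hca
  have hsmall_dba : ∠ d b a + ∠ b d a ≤ π :=
    two_angles_le_pi (p := b) (q := d) (r := a) hab.symm hda
  have htri_b : ∠ c b d ≤ ∠ c b a + ∠ a b d :=
    angle_pt_triangle (b := b) (p := c) (q := a) (r := d) hcb hab hdb
  have hcm1 : ∠ a b d = ∠ d b a := EuclideanGeometry.angle_comm _ _ _
  have hcm2 : ∠ b c a = ∠ a c b := EuclideanGeometry.angle_comm _ _ _
  have hcm3 : ∠ b d a = ∠ a d b := EuclideanGeometry.angle_comm _ _ _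
  have hl : ∠ b c d = θf l ∨ ∠ b d c = θf l := by
    rcases hl' with hl' | hl' | hl'
    · exfalso
      have hbl := hbigf l
      rw [hcm1] at htri_b
      rw [hl'] at htri_b
      rw [hcm2] at hsmall_cba
      rw [hcm3] at hsmall_dba
      linarith
    · exact Or.inl hl'
    · exact Or.inr hl'
  -- one of the four indices carries θ₄
  have h3cases : i = 3 ∨ j = 3 ∨ k = 3 ∨ l = 3 := by omega
  -- useful commutations
  have cm1 : ∠ d c b = ∠ b c d := EuclideanGeometry.angle_comm _ _ _
  have cm2 : ∠ c d b = ∠ b d c := EuclideanGeometry.angle_comm _ _ _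
  have cm3 : ∠ b d a = ∠ a d b := EuclideanGeometry.angle_comm _ _ _
  have cm4 : ∠ c d a = ∠ a d c := EuclideanGeometry.angle_comm _ _ _
  have cm5 : ∠ d c a = ∠ a c d := EuclideanGeometry.angle_comm _ _ _
  have cm6 : ∠ b c a = ∠ a c b := EuclideanGeometry.angle_comm _ _ _
  rcases hk with hk | hk <;> rcases hl with hl | hl
  · -- both remaining big angles at `c` : impossible
    exact not_three_big (b := c) (x := a) (y := b) (z := d) hca.symm hcb.symm hcd.symm
      hγ1 (bigof k _ _ _ hk) (bigof l _ _ _ hl)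
  · -- big angles at `c` (triangle acd) and at `d` (triangle bcd)
    have I1 : ∠ a c b ≤ ∠ a c d + ∠ d c b :=
      angle_pt_triangle (b := c) (p := a) (q := d) (r := b) hca.symm hcd.symm hcb.symm
    have I2 : ∠ a c d ≤ ∠ a c b + ∠ b c d :=
      angle_pt_triangle (b := c) (p := a) (q := b) (r := d) hca.symm hcb.symm hcd.symm
    have I3 : ∠ d c b + ∠ c d b ≤ π :=
      two_angles_le_pi (p := c) (q := d) (r := b) hcb hdb
    have I4 : ∠ a d b ≤ ∠ a d c + ∠ c d b :=
      angle_pt_triangle (b := d) (p := a) (q := c) (r := b) hda.symm hcd hdb.symm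
    have I5 : ∠ b d c ≤ ∠ b d a + ∠ a d c :=
      angle_pt_triangle (b := d) (p := b) (q := a) (r := c) hdb.symm hda.symm hcd
    have I6 : ∠ c d a + ∠ d c a ≤ π :=
      two_angles_le_pi (p := d) (q := c) (r := a) hda hca
    rw [cm1] at I1 I3
    rw [cm2] at I3 I4
    rw [cm3] at I5
    rw [cm4, cm5] at I6
    rw [hgi] at I1 I2
    rw [hgj] at I4 I5
    rw [hk] at I1 I2 I6
    rw [hl] at I3 I4 I5
    rcases h3cases with h3 | h3 | h3 | h3
    · have ht : θf i = θ₄ := by rw [h3]; exact hv3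
      have hs := h2small k l hkl (by omega) (by omega)
      linarith
    · have ht : θf j = θ₄ := by rw [h3]; exact hv3
      have hs := h2small k l hkl (by omega) (by omega)
      linarith
    · have ht : θf k = θ₄ := by rw [h3]; exact hv3
      have hs := h2small i l hil (by omega) (by omega)
      linarith
    · have ht : θf l = θ₄ := by rw [h3]; exact hv3
      have hs := h2small j k hjk (by omega) (by omega)
      linarith
  · -- big angles at `d` (triangle acd) and at `c` (triangle bcd)
    have J1 : ∠ a d b ≤ ∠ a d c + ∠ c d b :=
      angle_pt_triangle (b := d) (p := a) (q := c) (r := b) hda.symm hcd hdb.symm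
    have J2 : ∠ a d c ≤ ∠ a d b + ∠ b d c :=
      angle_pt_triangle (b := d) (p := a) (q := b) (r := c) hda.symm hdb.symm hcd
    have J3 : ∠ c d b + ∠ d c b ≤ π :=
      two_angles_le_pi (p := d) (q := c) (r := b) hdb hcb
    have J4 : ∠ a c b ≤ ∠ a c d + ∠ d c b :=
      angle_pt_triangle (b := c) (p := a) (q := d) (r := b) hca.symm hcd.symm hcb.symm
    have J5 : ∠ b c d ≤ ∠ b c a + ∠ a c d :=
      angle_pt_triangle (b := c) (p := b) (q := a) (r := d) hcb.symm hca.symm hcd.symm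
    have J6 : ∠ d c a + ∠ c d a ≤ π :=
      two_angles_le_pi (p := c) (q := d) (r := a) hca hda
    rw [cm1] at J3 J4
    rw [cm2] at J1 J3
    rw [cm6] at J5
    rw [cm4, cm5] at J6
    rw [hgi] at J4 J5
    rw [hgj] at J1 J2
    rw [hk] at J1 J2 J6
    rw [hl] at J3 J4 J5
    rcases h3cases with h3 | h3 | h3 | h3
    · have ht : θf i = θ₄ := by rw [h3]; exact hv3
      have hs := h2small k l hkl (by omega) (by omega)
      linarith
    · have ht : θf j = θ₄ := by rw [h3]; exact hv3
      have hs := h2small k l hkl (by omega) (by omega)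
      linarith
    · have ht : θf k = θ₄ := by rw [h3]; exact hv3
      have hs := h2small j l hjl (by omega) (by omega)
      linarith
    · have ht : θf l = θ₄ := by rw [h3]; exact hv3
      have hs := h2small i k hik (by omega) (by omega)
      linarith
  · -- both remaining big angles at `d` : impossible
    exact not_three_big (b := d) (x := a) (y := b) (z := c) hda.symm hdb.symm hcd
      hγ2 (bigof k _ _ _ hk) (bigof l _ _ _ hl)

end Main

end St19

/-- if `θ₁ > θ₂ > θ₃ > θ₄` are angles in `(0, π)` with
`θ₄ > 2π/3` and `θ₂ + θ₃ > π + θ₄`, then no four points in `ℝ³` (hence no four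
points in any dimension) realise all four angles. -/
theorem statement19 (θ₁ θ₂ θ₃ θ₄ : ℝ)
    (h12 : θ₂ < θ₁) (h23 : θ₃ < θ₂) (h34 : θ₄ < θ₃)
    (h1 : θ₁ ∈ Set.Ioo 0 Real.pi) (h2 : θ₂ ∈ Set.Ioo 0 Real.pi)
    (h3 : θ₃ ∈ Set.Ioo 0 Real.pi) (h4 : θ₄ ∈ Set.Ioo 0 Real.pi)
    (hbig : 2 * Real.pi / 3 < θ₄) (hsum : Real.pi + θ₄ < θ₂ + θ₃) :
    (¬ ∃ P : Finset (EuclideanSpace ℝ (Fin 3)), P.card = 4 ∧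
      Realises (P : Set (EuclideanSpace ℝ (Fin 3))) θ₁ ∧
      Realises (P : Set (EuclideanSpace ℝ (Fin 3))) θ₂ ∧
      Realises (P : Set (EuclideanSpace ℝ (Fin 3))) θ₃ ∧
      Realises (P : Set (EuclideanSpace ℝ (Fin 3))) θ₄) ∧
    ∀ d : ℕ, ¬ ∃ P : Finset (EuclideanSpace ℝ (Fin d)), P.card = 4 ∧
      Realises (P : Set (EuclideanSpace ℝ (Fin d))) θ₁ ∧
      Realises (P : Set (EuclideanSpace ℝ (Fin d))) θ₂ ∧
      Realises (P : Set (EuclideanSpace ℝ (Fin d))) θ₃ ∧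
      Realises (P : Set (EuclideanSpace ℝ (Fin d))) θ₄ := by
  constructor
  · exact St19.no_four h12 h23 h34 h1.2 hbig hsum
  · intro d
    exact St19.no_four h12 h23 h34 h1.2 hbig hsum
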